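/- For any Parseval frame Φ for F^N with M vectors, the quantity V(Φ) = ∑_i (||φ_i||² − N/M)² + ∑_{i≠j} (|⟨φ_i,φ_j⟩| − c_Φ)², where c_Φ = TC(Φ)/(M(M−1)), satisfies V(Φ) = N(M−N)/M − TC(Φ)²/(M(M−1)). -/

import Mathlib

open Matrix Finset

noncomputable def totalCoherence {N M : ℕ} (Φ : Matrix (Fin N) (Fin M) ℂ) : ℝ :=
  ∑ i, ∑ j ∈ Finset.univ.erase i, ‖(Φᴴ * Φ) i j‖

lemma sum_sub_sq_helper {α : Type*} (s : Finset α) (a : α → ℝ) (c : ℝ) :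
    ∑ i ∈ s, (a i - c)^2 = ∑ i ∈ s, (a i)^2 - 2*c*(∑ i ∈ s, a i) + s.card * c^2 := by
  simp only [sub_sq, Finset.sum_add_distrib, Finset.sum_sub_distrib, ← Finset.sum_mul,
    ← Finset.mul_sum, Finset.sum_const, nsmul_eq_mul]
  ring

/-- The formula for the total variance of the Gram matrix entries of a Parseval frame. -/
theorem variance_formula {N M : ℕ} (hNM : N ≤ M)
    (Φ : Matrix (Fin N) (Fin M) ℂ) (hΦ : Φ * Φᴴ = 1) :
    (∑ i, (((Φᴴ * Φ) i i).re - (N : ℝ) / (M : ℝ)) ^ 2) +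
        (∑ i, ∑ j ∈ Finset.univ.erase i,
          (‖(Φᴴ * Φ) i j‖ - totalCoherence Φ / ((M : ℝ) * ((M : ℝ) - 1))) ^ 2) =
      (N : ℝ) * ((M : ℝ) - (N : ℝ)) / (M : ℝ) -
        (totalCoherence Φ) ^ 2 / ((M : ℝ) * ((M : ℝ) - 1)) := by
  rcases Nat.eq_zero_or_pos M with hM0 | hMpos
  · have hN0 : N = 0 := by omega
    subst hM0; subst hN0
    simp [totalCoherence]
  -- main case : M ≥ 1
  set G := Φᴴ * Φ with hGdef
  set T := totalCoherence Φ with hTdef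
  have hT : T = ∑ i, ∑ j ∈ Finset.univ.erase i, ‖G i j‖ := rfl
  set c : ℝ := T / ((M : ℝ) * ((M : ℝ) - 1)) with hcdef
  have hG2 : G * G = G := by
    rw [hGdef, Matrix.mul_assoc, ← Matrix.mul_assoc Φ, hΦ, Matrix.one_mul]
  have hherm : Gᴴ = G := by
    rw [hGdef, Matrix.conjTranspose_mul, Matrix.conjTranspose_conjTranspose]
  have hdiagcast : ∀ i, G i i = ↑(∑ k, Complex.normSq (Φ k i)) := by
    intro i
    simp [hGdef, Matrix.mul_apply, Matrix.conjTranspose_apply, Complex.normSq_eq_conj_mul_self]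
  have habs : ∀ i, ‖G i i‖ = (G i i).re := by
    intro i
    rw [hdiagcast i, Complex.norm_real, Real.norm_eq_abs, Complex.ofReal_re]
    exact abs_of_nonneg (Finset.sum_nonneg fun k _ => Complex.normSq_nonneg _)
  have htr : ∑ i, (G i i).re = (N : ℝ) := by
    have h : Matrix.trace G = (N : ℂ) := by
      rw [hGdef, Matrix.trace_mul_comm, hΦ, Matrix.trace_one]; simp
    have := congrArg Complex.re h
    simpa [Matrix.trace, Matrix.diag, Complex.re_sum] using this
  have hcol : ∀ j, ∑ i, ‖G i j‖ ^ 2 = (G j j).re := by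
    intro j
    have h1 : (Gᴴ * G) j j = G j j := by rw [hherm, hG2]
    have h2 : (Gᴴ * G) j j = ↑(∑ i, Complex.normSq (G i j)) := by
      simp only [Matrix.mul_apply, Matrix.conjTranspose_apply, Complex.normSq_eq_conj_mul_self,
        Complex.ofReal_sum, RingHom.map_mul, Complex.star_def]
    rw [← h1, h2]
    simp [Complex.sq_norm]
  have hOfull : ∑ i, ∑ j, ‖G i j‖ ^ 2 = (N : ℝ) := by
    rw [Finset.sum_comm]
    simp_rw [hcol]
    exact htr
  have hO : ∑ i, ∑ j ∈ Finset.univ.erase i, ‖G i j‖ ^ 2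
      = (N : ℝ) - ∑ i, (G i i).re ^ 2 := by
    have step : ∀ i : Fin M, ∑ j ∈ Finset.univ.erase i, ‖G i j‖ ^ 2
        = (∑ j, ‖G i j‖ ^ 2) - (G i i).re ^ 2 := by
      intro i
      rw [Finset.sum_erase_eq_sub (Finset.mem_univ i), habs i]
    rw [Finset.sum_congr rfl fun i _ => step i, Finset.sum_sub_distrib, hOfull]
  have hcard : ((Finset.univ : Finset (Fin M)).card : ℝ) = (M : ℝ) := by simp
  have hcarde : ∀ i : Fin M, (((Finset.univ : Finset (Fin M)).erase i).card : ℝ)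
      = (M : ℝ) - 1 := by
    intro i
    rw [Finset.card_erase_of_mem (Finset.mem_univ i)]
    simp [Nat.cast_sub hMpos]
  have e1 : (∑ i, ((G i i).re - (N : ℝ) / (M : ℝ)) ^ 2)
      = (∑ i, (G i i).re ^ 2) - 2*((N:ℝ)/(M:ℝ))*(N:ℝ) + (M:ℝ)*((N:ℝ)/(M:ℝ))^2 := by
    rw [sum_sub_sq_helper, htr, hcard]
  have e2 : (∑ i, ∑ j ∈ Finset.univ.erase i, (‖G i j‖ - c) ^ 2)
      = ((N : ℝ) - ∑ i, (G i i).re ^ 2) - 2*c*T + (M:ℝ)*((M:ℝ)-1)*c^2 := by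
    have step : ∀ i : Fin M, ∑ j ∈ Finset.univ.erase i, (‖G i j‖ - c) ^ 2
        = (∑ j ∈ Finset.univ.erase i, ‖G i j‖ ^ 2)
          - 2*c*(∑ j ∈ Finset.univ.erase i, ‖G i j‖) + ((M:ℝ)-1)*c^2 := by
      intro i
      rw [sum_sub_sq_helper, hcarde i]
    rw [Finset.sum_congr rfl fun i _ => step i]
    rw [Finset.sum_add_distrib, Finset.sum_sub_distrib, ← Finset.mul_sum, hO, ← hT,
      Finset.sum_const, nsmul_eq_mul, hcard]
    ring
  rw [e1, e2]
  have hM0' : (M : ℝ) ≠ 0 := Nat.cast_ne_zero.mpr (by omega)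
  rcases eq_or_lt_of_le (Nat.succ_le_of_lt hMpos) with hM1 | hM2
  · -- M = 1
    have hM1n : M = 1 := hM1.symm
    subst hM1n
    have hT0 : T = 0 := by
      rw [hT]
      apply Finset.sum_eq_zero
      intro i _
      apply Finset.sum_eq_zero
      intro j hj
      exact absurd (Subsingleton.elim j i) (Finset.ne_of_mem_erase hj)
    rw [hcdef, hT0]
    norm_num
    ring
  · -- M ≥ 2
    have hM1' : (M : ℝ) - 1 ≠ 0 := by
      have h1 : (1 : ℕ) < M := hM2
      have : (1 : ℝ) < (M : ℝ) := by exact_mod_cast h1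
      linarith
    rw [hcdef]
    field_simp
    ring
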